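/- Let L : (ℝ^D)^m → ℝ be a symmetric loss whose gradient ∇L is locally Lipschitz, and let ρ : ℝ_{≥0} → ℝ^{Dm} be a solution of the gradient flow equation ρ'(t) = −∇L(ρ(t)). If ρ(0) does not belong to any symmetry subspace H_{i,j} for i ≠ j ∈ [m], then for every finite time t ≥ 0 and every pair i ≠ j ∈ [m], ρ(t) ∉ H_{i,j}; that is, the gradient flow started outside all symmetry subspaces never visits a symmetry subspace in finite time. -/

import Mathlib

open Set

/-- The parameter space of `m` units, each a vector in `ℝ^D`, with the
Euclidean (ℓ²) inner-product structure. -/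
abbrev Param (m D : ℕ) := PiLp 2 (fun _ : Fin m => EuclideanSpace ℝ (Fin D))

section aux

variable {E : Type*} [NormedAddCommGroup E] [InnerProductSpace ℝ E] [CompleteSpace E]

/-- The gradient of a function invariant under a linear isometric equivalence is
equivariant under that equivalence. -/
lemma gradient_comp_isometry (L : E → ℝ) (hd : Differentiable ℝ L)
    (P : E ≃ₗᵢ[ℝ] E) (h : ∀ x, L (P x) = L x) (x : E) :
    gradient L (P x) = P (gradient L x) := by
  have hL : (fun y => L (P.symm y)) = L := by
    funext y
    conv_rhs => rw [← P.apply_symm_apply y, h]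
  have h1 : HasFDerivAt L (InnerProductSpace.toDual ℝ E (gradient L x)) x :=
    ((hd x).hasGradientAt).hasFDerivAt
  have hP : HasFDerivAt (fun y => P.symm y)
      (P.symm.toContinuousLinearEquiv.toContinuousLinearMap) (P x) :=
    P.symm.toContinuousLinearEquiv.toContinuousLinearMap.hasFDerivAt
  have h1' : HasFDerivAt L (InnerProductSpace.toDual ℝ E (gradient L x))
      (P.symm (P x)) := by rwa [P.symm_apply_apply]
  have h2 : HasFDerivAt (fun y => L (P.symm y))
      ((InnerProductSpace.toDual ℝ E (gradient L x)).comp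
        P.symm.toContinuousLinearEquiv.toContinuousLinearMap) (P x) :=
    h1'.comp (P x) hP
  rw [hL] at h2
  have h3 : (InnerProductSpace.toDual ℝ E (gradient L x)).comp
      P.symm.toContinuousLinearEquiv.toContinuousLinearMap
      = InnerProductSpace.toDual ℝ E (P (gradient L x)) := by
    apply ContinuousLinearMap.ext
    intro v
    simp only [ContinuousLinearMap.comp_apply, InnerProductSpace.toDual_apply_apply,
      LinearIsometryEquiv.coe_toContinuousLinearEquiv,
      ContinuousLinearEquiv.coe_coe]
    rw [← P.inner_map_map (gradient L x) (P.symm v), P.apply_symm_apply]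
  rw [h3] at h2
  have h4 := h2.hasGradientAt.gradient
  simpa using h4

end aux

set_option synthInstance.maxHeartbeats 400000
set_option maxHeartbeats 2000000

/-- Let `L` be a C¹ permutation-symmetric loss on `m` units in `ℝ^D`
whose gradient is locally Lipschitz, and let `ρ` be a solution of the gradient flow
`ρ'(t) = -∇L(ρ(t))` for `t ≥ 0`. If `ρ 0` lies outside every symmetry subspace
`H_{i,j}` (`i ≠ j`), then for every finite time `t ≥ 0` and every pair `i ≠ j`,
`ρ t ∉ H_{i,j}`: the flow never visits a symmetry subspace in finite time. -/
theorem gradientFlow_avoids_symmetry_subspaces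
    {m D : ℕ} (L : Param m D → ℝ)
    (hC1 : ContDiff ℝ 1 L)
    (hsym : ∀ (π : Equiv.Perm (Fin m)) (θ : Param m D),
      L (WithLp.toLp 2 (fun i => θ (π i))) = L θ)
    (hLip : LocallyLipschitz (gradient L))
    (ρ : ℝ → Param m D)
    (hflow : ∀ t : ℝ, 0 ≤ t → HasDerivAt ρ (-gradient L (ρ t)) t)
    (h0 : ∀ i j : Fin m, i ≠ j → ρ 0 i ≠ ρ 0 j) :
    ∀ t : ℝ, 0 ≤ t → ∀ i j : Fin m, i ≠ j → ρ t i ≠ ρ t j := by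
  intro t₀ ht₀ i j hij heq
  haveI : ContinuousSMul ℝ (Param m D) := inferInstance
  set τ : Equiv.Perm (Fin m) := Equiv.swap i j with hτ
  set P : Param m D ≃ₗᵢ[ℝ] Param m D :=
    LinearIsometryEquiv.piLpCongrLeft 2 ℝ (EuclideanSpace ℝ (Fin D)) τ with hPdef
  have hPapp : ∀ (θ : Param m D) (k : Fin m), P θ k = θ (τ k) := by
    intro θ k
    simp only [hPdef, LinearIsometryEquiv.piLpCongrLeft_apply, Equiv.piCongrLeft'_apply,
      hτ, Equiv.symm_swap]
  have hLsym : ∀ θ, L (P θ) = L θ := by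
    intro θ
    have h1 : L (WithLp.toLp 2 (fun k => θ (τ k))) = L θ := hsym τ θ
    rw [← h1]
    exact congrArg L (PiLp.ext fun k => hPapp θ k)
  have hd : Differentiable ℝ L := hC1.differentiable one_ne_zero
  have hgrad : ∀ θ, gradient L (P θ) = P (gradient L θ) :=
    gradient_comp_isometry L hd P hLsym
  set g : ℝ → Param m D := fun t => P (ρ t) with hgdef
  have hg : ∀ t : ℝ, 0 ≤ t → HasDerivAt g (-gradient L (g t)) t := by
    intro t ht
    have h2 : HasDerivAt g (P.toContinuousLinearEquiv.toContinuousLinearMap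
        (-gradient L (ρ t))) t :=
      P.toContinuousLinearEquiv.toContinuousLinearMap.hasFDerivAt.comp_hasDerivAt t (hflow t ht)
    have : (P.toContinuousLinearEquiv.toContinuousLinearMap (-gradient L (ρ t)))
        = -gradient L (g t) := by
      simp only [map_neg, LinearIsometryEquiv.coe_toContinuousLinearEquiv,
        ContinuousLinearEquiv.coe_coe]
      rw [hgdef]
      simp [hgrad]
    rwa [this] at h2
  have hgt₀ : ρ t₀ = g t₀ := by
    refine PiLp.ext fun k => ?_
    rw [hgdef]
    simp only
    rw [hPapp]
    rcases eq_or_ne k i with rfl | hki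
    · rw [hτ, Equiv.swap_apply_left]; exact heq
    rcases eq_or_ne k j with rfl | hkj
    · rw [hτ, Equiv.swap_apply_right]; exact heq.symm
    · rw [hτ, Equiv.swap_apply_of_ne_of_ne hki hkj]
  -- the set of times in [0, t₀] where the two solutions agree
  set S : Set ℝ := {t | t ∈ Icc (0:ℝ) t₀ ∧ ρ t = g t} with hSdef
  have hSne : t₀ ∈ S := ⟨⟨ht₀, le_rfl⟩, hgt₀⟩
  have hSbdd : BddBelow S := ⟨0, fun t ht => ht.1.1⟩
  have hρcont : ContinuousOn ρ (Icc 0 t₀) := fun t ht =>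
    ((hflow t ht.1).continuousAt).continuousWithinAt
  have hgcont : ContinuousOn g (Icc 0 t₀) :=
    (P.continuous.comp_continuousOn hρcont)
  have hSclosed : IsClosed S := by
    have hsub : ContinuousOn (fun t => ρ t - g t) (Icc 0 t₀) := hρcont.sub hgcont
    have h4 := hsub.preimage_isClosed_of_isClosed isClosed_Icc
      (isClosed_singleton (x := (0 : Param m D)))
    convert h4 using 1
    ext t
    simp [hSdef, sub_eq_zero, and_comm]
  set c := sInf S with hcdef
  have hcS : c ∈ S := hSclosed.csInf_mem ⟨t₀, hSne⟩ hSbdd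
  rcases eq_or_lt_of_le hcS.1.1 with hc0 | hcpos
  · -- c = 0 : the two solutions agree at time 0, contradicting h0
    have h5 : ρ 0 = g 0 := by rw [hc0]; exact hcS.2
    have h6 : ρ 0 i = ρ 0 j := by
      have := congrFun (congrArg WithLp.ofLp h5) i
      rw [hgdef] at this
      simp only at this
      rw [hPapp, hτ, Equiv.swap_apply_left] at this
      exact this
    exact h0 i j hij h6
  · -- 0 < c : local uniqueness of the ODE near c pushes the meeting time earlier
    obtain ⟨K, U, hU, hKU⟩ := hLip (ρ c)
    have hvU : ∀ _t : ℝ, LipschitzOnWith (1 * K)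
        (fun x : Param m D => -gradient L x) U :=
      fun _ => LipschitzWith.id.neg.comp_lipschitzOnWith hKU
    have hρc : ContinuousAt ρ c := (hflow c hcS.1.1).continuousAt
    have hgc : ContinuousAt g c := P.continuous.continuousAt.comp hρc
    have hgceq : g c = ρ c := hcS.2.symm
    have hUg : U ∈ nhds (g c) := by rwa [hgceq]
    have hfev : ∀ᶠ t in nhds c, HasDerivAt ρ (-gradient L (ρ t)) t ∧ ρ t ∈ U := by
      filter_upwards [eventually_gt_nhds hcpos, hρc.preimage_mem_nhds hU] with t h1 h2
      exact ⟨hflow t h1.le, h2⟩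
    have hgev : ∀ᶠ t in nhds c, HasDerivAt g (-gradient L (g t)) t ∧ g t ∈ U := by
      filter_upwards [eventually_gt_nhds hcpos, hgc.preimage_mem_nhds hUg] with t h1 h2
      exact ⟨hg t h1.le, h2⟩
    have huniq : ρ =ᶠ[nhds c] g :=
      ODE_solution_unique_of_eventually (v := fun _ x => -gradient L x)
        (s := fun _ => U) (Filter.Eventually.of_forall hvU) hfev hgev hcS.2
    obtain ⟨ε, hε, hball⟩ := Metric.eventually_nhds_iff.mp huniq
    set t₁ : ℝ := max (c / 2) (c - ε / 2) with ht₁def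
    have ht₁lt : t₁ < c := max_lt (by linarith) (by linarith)
    have ht₁0 : 0 ≤ t₁ := le_trans (by linarith) (le_max_left _ _)
    have ht₁t₀ : t₁ ≤ t₀ := le_trans ht₁lt.le hcS.1.2
    have hdist : dist t₁ c < ε := by
      rw [Real.dist_eq, abs_lt]
      constructor
      · have : c - ε / 2 ≤ t₁ := le_max_right _ _
        linarith
      · linarith
    have ht₁S : t₁ ∈ S := ⟨⟨ht₁0, ht₁t₀⟩, hball hdist⟩
    have : c ≤ t₁ := csInf_le hSbdd ht₁S
    linarith
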